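/- arXiv:1601.04731 — 2 statements merged into one kernel-verified Lean document; each statement's English description precedes it below -/
import Mathlib

section
/- Let D_1,...,D_N be i.i.d. random variables with |D_i| ~ Gamma(1,√2) (i.e., D_i Laplace with mean 0 and variance 1), and set Q(N) = (1/N)Σ_{i=1}^N |D_i|. Then for every x > 3/(2√2), the tail probabilities are monotone decreasing in N: Pr(Q(1) ≥ x) ≥ Pr(Q(2) ≥ x) ≥ ... ≥ Pr(Q(N) ≥ x) ≥ .... -/
open MeasureTheory ProbabilityTheory Finset

open Real Set intervalIntegral
open scoped ENNReal NNReal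


noncomputable def tailSum (n : ℕ) (u : ℝ) : ℝ := ∑ k ∈ Finset.range n, u ^ k / (Nat.factorial k)

lemma tailSum_one (u : ℝ) : tailSum 1 u = 1 := by simp [tailSum]

lemma tailSum_succ (n : ℕ) (u : ℝ) :
    tailSum (n+1) u = tailSum n u + u ^ n / (Nat.factorial n) := by
  simp [tailSum, Finset.sum_range_succ]

lemma tailSum_nonneg {n : ℕ} {u : ℝ} (hu : 0 ≤ u) : 0 ≤ tailSum n u := by
  unfold tailSum; positivity

lemma hasDerivAt_expTail (n : ℕ) (t : ℝ) :
    HasDerivAt (fun s => Real.exp (-s) * tailSum (n+1) s)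
      (-(Real.exp (-t) * t ^ n / (Nat.factorial n))) t := by
  induction n with
  | zero =>
      have h : HasDerivAt (fun s : ℝ => Real.exp (-s)) (Real.exp (-t) * (-1)) t :=
        (hasDerivAt_id t).neg.exp
      have : (fun s : ℝ => Real.exp (-s) * tailSum 1 s) = fun s => Real.exp (-s) := by
        funext s; rw [tailSum_one, mul_one]
      rw [this]
      convert h using 1
      simp
  | succ n ih =>
      have hmono : HasDerivAt (fun s : ℝ => Real.exp (-s) * (s ^ (n+1) / (Nat.factorial (n+1))))
          (Real.exp (-t) * (-1) * (t ^ (n+1) / (Nat.factorial (n+1)))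
            + Real.exp (-t) * ((n+1) * t ^ n / (Nat.factorial (n+1)))) t := by
        have h1 : HasDerivAt (fun s : ℝ => Real.exp (-s)) (Real.exp (-t) * (-1)) t :=
          (hasDerivAt_id t).neg.exp
        have h2 : HasDerivAt (fun s : ℝ => s ^ (n+1) / (Nat.factorial (n+1)))
            (((n:ℝ)+1) * t ^ n / (Nat.factorial (n+1))) t := by
          have := (hasDerivAt_pow (n+1) t).div_const ((Nat.factorial (n+1) : ℝ))
          refine this.congr_deriv ?_
          push_cast; ring
        exact h1.mul h2
      have hsum := ih.add hmono
      have heq : (fun s : ℝ => Real.exp (-s) * tailSum (n+2) s)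
          = (fun s : ℝ => Real.exp (-s) * tailSum (n+1) s
              + Real.exp (-s) * (s ^ (n+1) / (Nat.factorial (n+1)))) := by
        funext s; rw [tailSum_succ]; ring
      rw [heq]
      refine hsum.congr_deriv ?_
      have hfac : (Nat.factorial (n+1) : ℝ) = ((n:ℝ)+1) * (Nat.factorial n : ℝ) := by
        push_cast [Nat.factorial_succ]; ring
      have h0 : (Nat.factorial n : ℝ) ≠ 0 := Nat.cast_ne_zero.mpr (Nat.factorial_ne_zero n)
      have h1 : ((n:ℝ)+1) ≠ 0 := by positivity
      rw [hfac]
      field_simp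
      ring


lemma cont_aux (n : ℕ) : Continuous (fun t : ℝ => Real.exp (-t) * t ^ n / (Nat.factorial n)) := by
  fun_prop

lemma tail_sub (n : ℕ) (a b : ℝ) :
    Real.exp (-a) * tailSum (n+1) a - Real.exp (-b) * tailSum (n+1) b
      = ∫ t in a..b, Real.exp (-t) * t ^ n / (Nat.factorial n) := by
  have h := integral_eq_sub_of_hasDerivAt (f := fun s => Real.exp (-s) * tailSum (n+1) s)
    (f' := fun t => -(Real.exp (-t) * t ^ n / (Nat.factorial n)))
    (fun t _ => hasDerivAt_expTail n t)
    (((cont_aux n).neg).intervalIntegrable a b)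
  rw [intervalIntegral.integral_neg] at h
  linarith [h]

lemma quadBinom (n : ℕ) {v : ℝ} (hv : 0 ≤ v) :
    1 + (n:ℝ) * v + (n:ℝ) * ((n:ℝ) - 1) / 2 * v ^ 2 ≤ (1 + v) ^ n := by
  induction n with
  | zero => simp
  | succ n ih =>
      have hn0 : 0 ≤ (n:ℝ) := Nat.cast_nonneg n
      have hnn : 0 ≤ (n:ℝ) * ((n:ℝ) - 1) := by
        rcases Nat.eq_zero_or_pos n with h | h
        · simp [h]
        · have : (1:ℝ) ≤ (n:ℝ) := by exact_mod_cast h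
          nlinarith
      have h1 : (1 + (n:ℝ) * v + (n:ℝ) * ((n:ℝ) - 1) / 2 * v ^ 2) * (1 + v) ≤ (1 + v) ^ (n+1) := by
        rw [pow_succ]
        exact mul_le_mul_of_nonneg_right ih (by linarith)
      push_cast
      nlinarith [mul_nonneg (mul_nonneg hnn hv) (mul_nonneg hv hv)]

lemma pow_succ_le_e_mul (n : ℕ) (hn : 1 ≤ n) : ((n:ℝ) + 1) ^ n ≤ Real.exp 1 * (n:ℝ) ^ n := by
  have hn0 : (0:ℝ) < (n:ℝ) := by exact_mod_cast hn
  have h1 : ((n:ℝ) + 1) = (n:ℝ) * (1 + 1/(n:ℝ)) := by field_simp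
  have h2 : (1 + 1/(n:ℝ)) ≤ Real.exp (1/(n:ℝ)) := by
    have := Real.add_one_le_exp (1/(n:ℝ)); linarith
  have h3 : (1 + 1/(n:ℝ)) ^ n ≤ Real.exp (1/(n:ℝ)) ^ n :=
    pow_le_pow_left₀ (by positivity) h2 n
  have h4 : Real.exp (1/(n:ℝ)) ^ n = Real.exp 1 := by
    rw [← Real.exp_nat_mul]
    congr 1
    field_simp
  calc ((n:ℝ) + 1) ^ n = (1 + 1/(n:ℝ)) ^ n * (n:ℝ) ^ n := by
        rw [h1, mul_pow]; ring
    _ ≤ Real.exp 1 * (n:ℝ) ^ n := by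
        rw [← h4]; exact mul_le_mul_of_nonneg_right h3 (by positivity)

lemma coreIneq {c p q : ℝ} (hc : 3/2 ≤ c) (hp : 2/(3*c) ≤ p) (hq : 1/(9*c^2) ≤ q) :
    Real.exp 1 * c + ((1+p+2*q) + (p+2*q)*c + q*c^2) ≤ Real.exp c * (1+p+2*q) := by
  have hc0 : (0:ℝ) < c := by linarith
  have hE : ∑ i ∈ range 6, c ^ i / (Nat.factorial i) ≤ Real.exp c :=
    Real.sum_le_exp_of_nonneg (by linarith) 6
  have hsum : ∑ i ∈ range 6, c ^ i / (Nat.factorial i)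
        = 1 + c + c^2/2 + c^3/6 + c^4/24 + c^5/120 := by
    simp [Finset.sum_range_succ, Nat.factorial]
  have hE' : 1 + c + c^2/2 + c^3/6 + c^4/24 + c^5/120 ≤ Real.exp c := hsum ▸ hE
  have he : Real.exp 1 < 2.7182818286 := Real.exp_one_lt_d9
  have h1 : 0 ≤ Real.exp c - 1 - c := by nlinarith [sq_nonneg c, pow_nonneg hc0.le 3, pow_nonneg hc0.le 4, pow_nonneg hc0.le 5]
  have h2 : 0 ≤ 2 * Real.exp c - 2 - 2*c - c^2 := by
    nlinarith [pow_nonneg hc0.le 3, pow_nonneg hc0.le 4, pow_nonneg hc0.le 5]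
  have big : 9*c^2*(Real.exp 1 * c) ≤ 9*c^2*(Real.exp c - 1) + 6*c*(Real.exp c - 1 - c)
      + (2*Real.exp c - 2 - 2*c - c^2) := by
    have hd : 0 ≤ c - 3/2 := by linarith
    nlinarith [mul_le_mul_of_nonneg_right hE' (show (0:ℝ) ≤ 9*c^2+6*c+2 by positivity),
      mul_le_mul_of_nonneg_left he.le (show (0:ℝ) ≤ 9*c^3 by positivity),
      mul_nonneg hd (pow_nonneg hc0.le 3),
      mul_nonneg hd (pow_nonneg hc0.le 4),
      mul_nonneg hd (pow_nonneg hc0.le 5),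
      mul_nonneg hd (pow_nonneg hc0.le 6),
      pow_nonneg hc0.le 3]
  have key : Real.exp 1 * c ≤ (Real.exp c - 1) + (2/(3*c))*(Real.exp c - 1 - c)
      + (1/(9*c^2))*(2*Real.exp c - 2 - 2*c - c^2) := by
    rw [← sub_nonneg]
    have expand : (Real.exp c - 1) + (2/(3*c))*(Real.exp c - 1 - c)
        + (1/(9*c^2))*(2*Real.exp c - 2 - 2*c - c^2) - Real.exp 1 * c
        = (9*c^2*(Real.exp c - 1) + 6*c*(Real.exp c - 1 - c)
            + (2*Real.exp c - 2 - 2*c - c^2) - 9*c^2*(Real.exp 1 * c)) / (9*c^2) := by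
      field_simp
      ring
    rw [expand]
    apply div_nonneg _ (by positivity)
    linarith
  have hpA := mul_le_mul_of_nonneg_right hp h1
  have hqB := mul_le_mul_of_nonneg_right hq h2
  nlinarith [hpA, hqB, key]


lemma keyIntegral (m : ℕ) (hm : 2 ≤ m) (c : ℝ) (hc : 3/2 ≤ c) :
    Real.exp (-(((m:ℝ)+2)*c)) * (((m:ℝ)+2)*c) ^ (m+1) / (Nat.factorial (m+1))
      ≤ ∫ t in (((m:ℝ)+1)*c)..(((m:ℝ)+2)*c),
          Real.exp (-t) * t ^ m / (Nat.factorial m) := by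
  have hc0 : (0:ℝ) < c := by linarith
  have hm2 : (2:ℝ) ≤ (m:ℝ) := by exact_mod_cast hm
  obtain ⟨a, ha⟩ : ∃ a : ℝ, a = ((m:ℝ)+1) * c := ⟨_, rfl⟩
  obtain ⟨b, hb⟩ : ∃ b : ℝ, b = ((m:ℝ)+2) * c := ⟨_, rfl⟩
  have ha0 : (0:ℝ) < a := by rw [ha]; positivity
  have hab : a ≤ b := by rw [ha, hb]; nlinarith
  have hba : b - a = c := by rw [ha, hb]; ring
  obtain ⟨p, hp⟩ : ∃ p : ℝ, p = (m:ℝ)/a := ⟨_, rfl⟩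
  obtain ⟨q, hq⟩ : ∃ q : ℝ, q = (m:ℝ)*((m:ℝ)-1)/(2*a^2) := ⟨_, rfl⟩
  obtain ⟨B, hB⟩ : ∃ B : ℝ, B = p + 2*q := ⟨_, rfl⟩
  obtain ⟨A, hA⟩ : ∃ A : ℝ, A = 1 + B := ⟨_, rfl⟩
  have hΦ : ∀ t : ℝ, HasDerivAt (fun s => -(Real.exp (-s) * (A + B*(s-a) + q*(s-a)^2)))
      (Real.exp (-t) * (1 + p*(t-a) + q*(t-a)^2)) t := by
    intro t
    have h1 : HasDerivAt (fun s : ℝ => Real.exp (-s)) (Real.exp (-t) * (-1)) t :=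
      (hasDerivAt_id t).neg.exp
    have hsub : HasDerivAt (fun s : ℝ => s - a) 1 t := (hasDerivAt_id t).sub_const a
    have h2 : HasDerivAt (fun s : ℝ => A + B*(s-a) + q*(s-a)^2)
        (B * 1 + q * (2 * (t-a)^1 * 1)) t :=
      (((hsub.const_mul B).const_add A).add ((hsub.pow 2).const_mul q))
    have h3 := (h1.mul h2).neg
    refine h3.congr_deriv (Eq.symm ?_)
    have hABp : A - B = 1 := by rw [hA]; ring
    have hBq : B - 2*q = p := by rw [hB]; ring
    linear_combination (-(Real.exp (-t))) * hABp + (-(Real.exp (-t) * (t - a))) * hBq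
  have hgcont : Continuous (fun t : ℝ => Real.exp (-t) * (1 + p*(t-a) + q*(t-a)^2)) := by
    fun_prop
  have hint : ∫ t in a..b, Real.exp (-t) * (1 + p*(t-a) + q*(t-a)^2)
      = Real.exp (-a) * A - Real.exp (-b) * (A + B*c + q*c^2) := by
    have h := integral_eq_sub_of_hasDerivAt
      (f := fun s => -(Real.exp (-s) * (A + B*(s-a) + q*(s-a)^2)))
      (f' := fun t => Real.exp (-t) * (1 + p*(t-a) + q*(t-a)^2))
      (fun t _ => hΦ t) (hgcont.intervalIntegrable a b)
    rw [h]
    beta_reduce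
    rw [show b - a = c from hba]
    ring
  have hpoint : ∀ t ∈ Set.Icc a b,
      (a ^ m / (Nat.factorial m)) * (Real.exp (-t) * (1 + p*(t-a) + q*(t-a)^2))
        ≤ Real.exp (-t) * t ^ m / (Nat.factorial m) := by
    intro t ht
    obtain ⟨hta, htb⟩ := ht
    have hu : 0 ≤ t - a := by linarith
    have hv : 0 ≤ (t - a)/a := by positivity
    have hqB := quadBinom m hv
    have hclaim : a ^ m * (1 + p*(t-a) + q*(t-a)^2) ≤ t ^ m := by
      have h1 : 1 + p*(t-a) + q*(t-a)^2
          = 1 + (m:ℝ) * ((t-a)/a) + (m:ℝ)*((m:ℝ)-1)/2 * ((t-a)/a)^2 := by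
        rw [hp, hq]
        field_simp
      have h2 : a ^ m * (1 + (t-a)/a) ^ m = t ^ m := by
        rw [← mul_pow]
        congr 1
        field_simp
        ring
      calc a ^ m * (1 + p*(t-a) + q*(t-a)^2)
          ≤ a ^ m * (1 + (t-a)/a) ^ m := by
            rw [h1]; exact mul_le_mul_of_nonneg_left hqB (by positivity)
        _ = t ^ m := h2
    have e1 : (a ^ m / (Nat.factorial m)) * (Real.exp (-t) * (1 + p*(t-a) + q*(t-a)^2))
        = (Real.exp (-t) / (Nat.factorial m)) * (a ^ m * (1 + p*(t-a) + q*(t-a)^2)) := by ring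
    have e2 : Real.exp (-t) * t ^ m / (Nat.factorial m)
        = (Real.exp (-t) / (Nat.factorial m)) * t ^ m := by ring
    rw [e1, e2]
    exact mul_le_mul_of_nonneg_left hclaim (by positivity)
  have hfcont : Continuous (fun t : ℝ => Real.exp (-t) * t ^ m / (Nat.factorial m)) := by fun_prop
  have hmono : ∫ t in a..b, (a ^ m / (Nat.factorial m)) * (Real.exp (-t) * (1 + p*(t-a) + q*(t-a)^2))
      ≤ ∫ t in a..b, Real.exp (-t) * t ^ m / (Nat.factorial m) :=
    intervalIntegral.integral_mono_on hab
      ((continuous_const.mul hgcont).intervalIntegrable a b)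
      (hfcont.intervalIntegrable a b) hpoint
  rw [intervalIntegral.integral_const_mul, hint] at hmono
  -- scalar facts
  have hpge : 2/(3*c) ≤ p := by
    rw [hp, ha, div_le_div_iff₀ (by positivity) (by positivity)]
    nlinarith
  have hqge : 1/(9*c^2) ≤ q := by
    rw [hq, ha, div_le_div_iff₀ (by positivity) (by positivity)]
    have hfact : 0 ≤ ((m:ℝ) - 2) * (7*(m:ℝ) + 1) :=
      mul_nonneg (by linarith) (by positivity)
    nlinarith [mul_nonneg hfact (sq_nonneg c)]
  have hcore : Real.exp 1 * c + (A + B*c + q*c^2) ≤ Real.exp c * A := by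
    rw [hA, hB]
    have := coreIneq hc hpge hqge
    linarith
  have hbpow : b ^ (m+1) ≤ Real.exp 1 * ((m:ℝ)+1) * c * a ^ m := by
    have h1 : ((m:ℝ)+2) ^ (m+1) ≤ Real.exp 1 * ((m:ℝ)+1) ^ (m+1) := by
      have h := pow_succ_le_e_mul (m+1) (by omega)
      push_cast at h
      calc ((m:ℝ)+2) ^ (m+1) = ((m:ℝ)+1+1) ^ (m+1) := by ring_nf
        _ ≤ Real.exp 1 * ((m:ℝ)+1) ^ (m+1) := h
    have h3 : ((m:ℝ)+1) ^ (m+1) * c ^ (m+1) = ((m:ℝ)+1) * c * a ^ m := by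
      rw [ha, mul_pow, pow_succ', pow_succ']
      ring
    calc b ^ (m+1) = ((m:ℝ)+2) ^ (m+1) * c ^ (m+1) := by rw [hb, mul_pow]
      _ ≤ (Real.exp 1 * ((m:ℝ)+1) ^ (m+1)) * c ^ (m+1) :=
          mul_le_mul_of_nonneg_right h1 (by positivity)
      _ = Real.exp 1 * (((m:ℝ)+1) ^ (m+1) * c ^ (m+1)) := by ring
      _ = Real.exp 1 * ((m:ℝ)+1) * c * a ^ m := by rw [h3]; ring
  have hfac : ((Nat.factorial (m+1)):ℝ) = ((m:ℝ)+1) * (Nat.factorial m : ℝ) := by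
    push_cast [Nat.factorial_succ]
    ring
  have hfm : (0:ℝ) < (Nat.factorial m : ℝ) := by positivity
  have step1 : Real.exp (-b) * b ^ (m+1) / (Nat.factorial (m+1))
      ≤ (a ^ m / (Nat.factorial m)) * (Real.exp (-b) * (Real.exp 1 * c)) := by
    have hL : Real.exp (-b) * b ^ (m+1) ≤ Real.exp (-b) * (Real.exp 1 * ((m:ℝ)+1) * c * a ^ m) :=
      mul_le_mul_of_nonneg_left hbpow (Real.exp_pos _).le
    have heq : Real.exp (-b) * (Real.exp 1 * ((m:ℝ)+1) * c * a ^ m) / (Nat.factorial (m+1))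
        = (a ^ m / (Nat.factorial m)) * (Real.exp (-b) * (Real.exp 1 * c)) := by
      rw [hfac]
      field_simp
    calc Real.exp (-b) * b ^ (m+1) / (Nat.factorial (m+1))
        ≤ Real.exp (-b) * (Real.exp 1 * ((m:ℝ)+1) * c * a ^ m) / (Nat.factorial (m+1)) := by
          gcongr
      _ = (a ^ m / (Nat.factorial m)) * (Real.exp (-b) * (Real.exp 1 * c)) := heq
  have step2 : Real.exp (-b) * (Real.exp 1 * c)
      ≤ Real.exp (-a) * A - Real.exp (-b) * (A + B*c + q*c^2) := by
    have hexpab : Real.exp (-a) = Real.exp (-b) * Real.exp c := by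
      rw [← Real.exp_add]; congr 1; linarith
    have h2' := mul_le_mul_of_nonneg_left hcore (Real.exp_pos (-b)).le
    rw [hexpab]
    nlinarith [h2']
  have step3 : (a ^ m / (Nat.factorial m)) * (Real.exp (-b) * (Real.exp 1 * c))
      ≤ (a ^ m / (Nat.factorial m)) * (Real.exp (-a) * A - Real.exp (-b) * (A + B*c + q*c^2)) :=
    mul_le_mul_of_nonneg_left step2 (by positivity)
  rw [← ha, ← hb]
  calc Real.exp (-b) * b ^ (m+1) / (Nat.factorial (m+1))
      ≤ (a ^ m / (Nat.factorial m)) * (Real.exp (-b) * (Real.exp 1 * c)) := step1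
    _ ≤ (a ^ m / (Nat.factorial m)) * (Real.exp (-a) * A - Real.exp (-b) * (A + B*c + q*c^2)) := step3
    _ ≤ ∫ t in a..b, Real.exp (-t) * t ^ m / (Nat.factorial m) := hmono


lemma partC (n : ℕ) (hn : 1 ≤ n) (c : ℝ) (hc : 3/2 ≤ c) :
    Real.exp (-(((n:ℝ)+1)*c)) * tailSum (n+1) (((n:ℝ)+1)*c)
      ≤ Real.exp (-((n:ℝ)*c)) * tailSum n ((n:ℝ)*c) := by
  have hc0 : (0:ℝ) < c := by linarith
  have hE4 : 1 + c + c^2/2 + c^3/6 + c^4/24 ≤ Real.exp c := by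
    have h := Real.sum_le_exp_of_nonneg (le_of_lt hc0) 5
    have he : ∑ i ∈ range 5, c ^ i / (Nat.factorial i) = 1 + c + c^2/2 + c^3/6 + c^4/24 := by
      simp [Finset.sum_range_succ, Nat.factorial]
    linarith [he ▸ h]
  match n, hn with
  | 1, _ =>
      have ht2 : ∀ u : ℝ, tailSum 2 u = 1 + u := by
        intro u; simp [tailSum, Finset.sum_range_succ]
      have ht1 : ∀ u : ℝ, tailSum 1 u = 1 := by
        intro u; simp [tailSum]
      push_cast
      rw [ht2, ht1]
      have hkey : 1 + (1+1)*c ≤ Real.exp c := by nlinarith [hE4]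
      have hmul := mul_le_mul_of_nonneg_left hkey (Real.exp_pos (-((1+1)*c))).le
      have hexp : Real.exp (-((1+1)*c)) * Real.exp c = Real.exp (-(1*c)) := by
        rw [← Real.exp_add]; congr 1; ring
      calc Real.exp (-((1+1:ℝ)*c)) * (1 + (1+1:ℝ)*c)
          ≤ Real.exp (-((1+1:ℝ)*c)) * Real.exp c := by
            convert hmul using 2 <;> norm_num
        _ = Real.exp (-((1:ℝ)*c)) * 1 := by rw [← hexp]; ring_nf
  | 2, _ =>
      have ht3 : ∀ u : ℝ, tailSum 3 u = 1 + u + u^2/2 := by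
        intro u; simp [tailSum, Finset.sum_range_succ, Nat.factorial]
      have ht2 : ∀ u : ℝ, tailSum 2 u = 1 + u := by
        intro u; simp [tailSum, Finset.sum_range_succ]
      push_cast
      rw [ht3, ht2]
      have hkey : 1 + ((2:ℝ)+1)*c + (((2:ℝ)+1)*c)^2/2 ≤ Real.exp c * (1 + (2:ℝ)*c) := by
        nlinarith [mul_le_mul_of_nonneg_right hE4 (by positivity : (0:ℝ) ≤ 1+2*c),
          mul_nonneg (mul_nonneg (sub_nonneg.mpr hc) hc0.le) hc0.le,
          mul_nonneg (mul_nonneg (mul_nonneg (sub_nonneg.mpr hc) hc0.le) hc0.le) hc0.le,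
          mul_nonneg (mul_nonneg (mul_nonneg (mul_nonneg (sub_nonneg.mpr hc) hc0.le) hc0.le) hc0.le) hc0.le]
      have hmul := mul_le_mul_of_nonneg_left hkey (Real.exp_pos (-(((2:ℝ)+1)*c))).le
      have hexp : Real.exp (-(((2:ℝ)+1)*c)) * Real.exp c = Real.exp (-((2:ℝ)*c)) := by
        rw [← Real.exp_add]; congr 1; ring
      calc Real.exp (-(((2:ℝ)+1)*c)) * (1 + ((2:ℝ)+1)*c + (((2:ℝ)+1)*c)^2/2)
          ≤ Real.exp (-(((2:ℝ)+1)*c)) * (Real.exp c * (1 + (2:ℝ)*c)) := hmul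
        _ = Real.exp (-((2:ℝ)*c)) * (1 + (2:ℝ)*c) := by rw [← hexp]; ring
  | (m+3), _ =>
      have hKI := keyIntegral (m+2) (by omega) c hc
      have hTS := tail_sub (m+2) (((m:ℝ)+3)*c) (((m:ℝ)+4)*c)
      push_cast at hKI
      have e1 : ((m:ℝ)+2+2) = (m:ℝ)+4 := by ring
      have e2 : ((m:ℝ)+2+1) = (m:ℝ)+3 := by ring
      rw [e1, e2] at hKI
      -- goal normalization
      have e3 : (((m+3:ℕ):ℝ)+1) = (m:ℝ)+4 := by push_cast; ring
      have e4 : ((m+3:ℕ):ℝ) = (m:ℝ)+3 := by push_cast; ring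
      rw [e3, e4]
      have hsucc := tailSum_succ (m+3) (((m:ℝ)+4)*c)
      have expand : Real.exp (-(((m:ℝ)+4)*c)) * tailSum (m+3+1) (((m:ℝ)+4)*c)
          = Real.exp (-(((m:ℝ)+4)*c)) * tailSum (m+3) (((m:ℝ)+4)*c)
            + Real.exp (-(((m:ℝ)+4)*c)) * ((((m:ℝ)+4)*c) ^ (m+3) / (Nat.factorial (m+3))) := by
        rw [hsucc]; ring
      have hKI' : Real.exp (-(((m:ℝ)+4)*c)) * ((((m:ℝ)+4)*c) ^ (m+3) / (Nat.factorial (m+3)))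
          ≤ Real.exp (-(((m:ℝ)+3)*c)) * tailSum (m+3) (((m:ℝ)+3)*c)
            - Real.exp (-(((m:ℝ)+4)*c)) * tailSum (m+3) (((m:ℝ)+4)*c) := by
        rw [hTS]
        calc Real.exp (-(((m:ℝ)+4)*c)) * ((((m:ℝ)+4)*c) ^ (m+3) / (Nat.factorial (m+3)))
            = Real.exp (-(((m:ℝ)+4)*c)) * (((m:ℝ)+4)*c) ^ (m+3) / (Nat.factorial (m+3)) := by
              ring
          _ ≤ _ := hKI
      linarith [expand, hKI']

noncomputable def tailF (r : ℝ) (n : ℕ) (t : ℝ) : ℝ :=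
  if 0 ≤ t then Real.exp (-(r*t)) * tailSum n (r*t) else 1

lemma tailSum_zero_arg (n : ℕ) (hn : 1 ≤ n) : tailSum n 0 = 1 := by
  unfold tailSum
  rw [Finset.sum_eq_single 0]
  · simp
  · intro k _ hk
    rcases Nat.exists_eq_succ_of_ne_zero hk with ⟨j, rfl⟩
    simp [zero_pow]
  · intro h
    simp [Finset.mem_range] at h
    omega

lemma tailF_of_nonpos {r : ℝ} {n : ℕ} (hn : 1 ≤ n) {t : ℝ} (ht : t ≤ 0) : tailF r n t = 1 := by
  unfold tailF
  split_ifs with h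
  · have : t = 0 := le_antisymm ht h
    subst this
    simp [tailSum_zero_arg n hn]
  · rfl

lemma tailF_nonneg {r : ℝ} (hr : 0 < r) (n : ℕ) (t : ℝ) : 0 ≤ tailF r n t := by
  unfold tailF
  split_ifs with h
  · have : 0 ≤ r * t := by positivity
    have := tailSum_nonneg (n := n) this
    positivity
  · norm_num

lemma continuous_tailSum (n : ℕ) : Continuous (tailSum n) := by
  unfold tailSum
  exact continuous_finset_sum _ (fun k _ => (continuous_pow k).div_const _)

lemma measurable_tailF (r : ℝ) (n : ℕ) : Measurable (tailF r n) := by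
  unfold tailF
  exact Measurable.ite measurableSet_Ici
    ((((continuous_const.mul continuous_id).neg.rexp).mul
      ((continuous_tailSum n).comp (continuous_const.mul continuous_id))).measurable)
    measurable_const

-- gamma measure of singletons is zero
lemma gamma_singleton_zero (a r t : ℝ) : gammaMeasure a r {t} = 0 := by
  rw [gammaMeasure, withDensity_apply _ (measurableSet_singleton t)]
  rw [Measure.restrict_eq_zero.mpr (by simp)]
  simp

lemma gamma_Iic (r : ℝ) (hr : 0 < r) (t : ℝ) :
    gammaMeasure 1 r (Iic t) = ENNReal.ofReal (if 0 ≤ t then 1 - Real.exp (-(r*t)) else 0) := by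
  rw [gammaMeasure, withDensity_apply _ measurableSet_Iic]
  exact lintegral_exponentialPDF_eq_antiDeriv hr t

lemma gamma_Ioi (r : ℝ) (hr : 0 < r) (t : ℝ) (ht : 0 ≤ t) :
    gammaMeasure 1 r (Ioi t) = ENNReal.ofReal (Real.exp (-(r*t))) := by
  have hP : IsProbabilityMeasure (gammaMeasure 1 r) := isProbabilityMeasure_gammaMeasure one_pos hr
  have h1 : gammaMeasure 1 r (Ioi t) = 1 - gammaMeasure 1 r (Iic t) := by
    rw [← compl_Iic]
    rw [measure_compl measurableSet_Iic (measure_ne_top _ _)]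
    simp
  rw [h1, gamma_Iic r hr t, if_pos ht]
  have hle : Real.exp (-(r*t)) ≤ 1 := by
    rw [Real.exp_le_one_iff]
    have : 0 ≤ r * t := by positivity
    linarith
  have : (1:ℝ≥0∞) = ENNReal.ofReal 1 := by simp
  rw [this, ← ENNReal.ofReal_sub _ (by linarith : (0:ℝ) ≤ 1 - Real.exp (-(r*t)))]
  congr 1
  ring
lemma gamma_Ici (r : ℝ) (hr : 0 < r) (t : ℝ) :
    gammaMeasure 1 r (Ici t) = ENNReal.ofReal (tailF r 1 t) := by
  rcases le_or_gt t 0 with ht | ht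
  · rw [tailF_of_nonpos le_rfl ht]
    have hP : IsProbabilityMeasure (gammaMeasure 1 r) := isProbabilityMeasure_gammaMeasure one_pos hr
    have h1 : gammaMeasure 1 r (Ici t) = 1 - gammaMeasure 1 r (Iio t) := by
      rw [← compl_Iio, measure_compl measurableSet_Iio (measure_ne_top _ _)]
      simp
    have h2 : gammaMeasure 1 r (Iio t) = 0 := by
      rw [gammaMeasure, withDensity_apply _ measurableSet_Iio]
      exact lintegral_gammaPDF_of_nonpos ht
    rw [h1, h2]
    simp
  · have heq : gammaMeasure 1 r (Ici t) = gammaMeasure 1 r (Ioi t) := by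
      rw [← Set.Ici_sdiff_left]
      exact (measure_diff_null (gamma_singleton_zero 1 r t)).symm
    rw [heq, gamma_Ioi r hr t ht.le]
    congr 1
    simp [tailF, tailSum, if_pos ht.le]

lemma sumShift (n : ℕ) (u : ℝ) :
    tailSum (n+1) u = 1 + ∑ k ∈ Finset.range n, u^(k+1)/(Nat.factorial (k+1)) := by
  rw [tailSum, Finset.sum_range_succ']
  simp [add_comm, tailSum]

lemma convStep (r : ℝ) (hr : 0 < r) (n : ℕ) (hn : 1 ≤ n) (t : ℝ) :
    ∫⁻ y, ENNReal.ofReal (tailF r n (t - y)) ∂(gammaMeasure 1 r)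
      = ENNReal.ofReal (tailF r (n+1) t) := by
  have hpdfm : Measurable (gammaPDF 1 r) := (measurable_gammaPDFReal 1 r).ennreal_ofReal
  have hgm : Measurable (fun y => ENNReal.ofReal (tailF r n (t - y))) :=
    ((measurable_tailF r n).comp (measurable_const.sub measurable_id)).ennreal_ofReal
  rw [gammaMeasure, lintegral_withDensity_eq_lintegral_mul volume hpdfm hgm]
  simp only [Pi.mul_apply]
  have hIio : ∫⁻ y in Iio 0, gammaPDF 1 r y * ENNReal.ofReal (tailF r n (t - y)) = 0 := by
    rw [setLIntegral_congr_fun measurableSet_Iio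
      (fun y (hy : y < 0) => by rw [gammaPDF_of_neg hy, zero_mul])]
    simp
  have hIio_pdf : ∫⁻ y in Iio 0, gammaPDF 1 r y = 0 := by
    rw [setLIntegral_congr_fun measurableSet_Iio
      (fun y (hy : y < 0) => gammaPDF_of_neg hy)]
    simp
  have hsplit := lintegral_add_compl (μ := volume)
    (fun y => gammaPDF 1 r y * ENNReal.ofReal (tailF r n (t - y)))
    (measurableSet_Iio (a := (0:ℝ)))
  rw [compl_Iio] at hsplit
  rcases le_or_gt t 0 with ht | ht
  · -- t ≤ 0 : everything is the full mass 1
    rw [tailF_of_nonpos (by omega) ht]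
    have hIci : ∫⁻ y in Ici 0, gammaPDF 1 r y * ENNReal.ofReal (tailF r n (t - y))
        = ∫⁻ y in Ici 0, gammaPDF 1 r y := by
      apply setLIntegral_congr_fun measurableSet_Ici
      intro y hy
      beta_reduce
      rw [tailF_of_nonpos hn (by linarith [mem_Ici.mp hy] : t - y ≤ 0)]
      simp
    have hIci_pdf : ∫⁻ y in Ici 0, gammaPDF 1 r y = 1 := by
      have h2 := lintegral_add_compl (μ := volume) (gammaPDF 1 r) (measurableSet_Iio (a := (0:ℝ)))
      rw [compl_Iio, hIio_pdf, zero_add, lintegral_gammaPDF_eq_one one_pos hr] at h2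
      exact h2
    rw [← hsplit, hIio, hIci, hIci_pdf, zero_add]
    simp
  · -- t > 0
    have hIci_split : ∫⁻ y in Ici 0, gammaPDF 1 r y * ENNReal.ofReal (tailF r n (t - y))
        = (∫⁻ y in Icc 0 t, gammaPDF 1 r y * ENNReal.ofReal (tailF r n (t - y)))
          + ∫⁻ y in Ioi t, gammaPDF 1 r y * ENNReal.ofReal (tailF r n (t - y)) := by
      rw [← Icc_union_Ioi_eq_Ici ht.le, lintegral_union measurableSet_Ioi]
      rw [Set.disjoint_left]
      intro y hy1 hy2
      exact absurd (mem_Icc.mp hy1).2 (not_le.mpr (mem_Ioi.mp hy2))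
    have hIoi : ∫⁻ y in Ioi t, gammaPDF 1 r y * ENNReal.ofReal (tailF r n (t - y))
        = ENNReal.ofReal (Real.exp (-(r*t))) := by
      rw [setLIntegral_congr_fun measurableSet_Ioi ((fun y (hy : t < y) =>
        show gammaPDF 1 r y * ENNReal.ofReal (tailF r n (t - y)) = gammaPDF 1 r y by
          rw [tailF_of_nonpos hn (by linarith : t - y ≤ 0)]
          simp))]
      rw [← withDensity_apply _ measurableSet_Ioi]
      exact gamma_Ioi r hr t ht.le
    -- the Icc piece
    set g : ℝ → ℝ := fun y =>
      r * Real.exp (-(r*y)) * (Real.exp (-(r*(t-y))) * tailSum n (r*(t-y))) with hgdef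
    have hgcont : Continuous g := by
      apply Continuous.mul
      · fun_prop
      · exact (by fun_prop : Continuous fun y : ℝ => Real.exp (-(r*(t-y)))).mul
          ((continuous_tailSum n).comp (by fun_prop))
    have hIcc1 : ∫⁻ y in Icc 0 t, gammaPDF 1 r y * ENNReal.ofReal (tailF r n (t - y))
        = ∫⁻ y in Icc 0 t, ENNReal.ofReal (g y) := by
      apply setLIntegral_congr_fun measurableSet_Icc
      intro y hy
      obtain ⟨h0, hyt⟩ := mem_Icc.mp hy
      beta_reduce
      rw [show gammaPDF 1 r y = exponentialPDF r y from rfl, exponentialPDF_of_nonneg h0,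
        tailF, if_pos (by linarith : (0:ℝ) ≤ t - y), ← ENNReal.ofReal_mul (by positivity)]
    have hgnn : 0 ≤ᵐ[volume.restrict (Icc 0 t)] g := by
      filter_upwards [ae_restrict_mem measurableSet_Icc] with y hy
      simp only [Pi.zero_apply]
      obtain ⟨h0, hyt⟩ := mem_Icc.mp hy
      have h1 : 0 ≤ r * (t - y) := by nlinarith
      exact mul_nonneg (by positivity)
        (mul_nonneg (Real.exp_pos _).le (tailSum_nonneg h1))
    have hIcc2 : ∫⁻ y in Icc 0 t, ENNReal.ofReal (g y)
        = ENNReal.ofReal (∫ y in Icc 0 t, g y) :=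
      (ofReal_integral_eq_lintegral_ofReal (hgcont.integrableOn_Icc) hgnn).symm
    -- compute the real integral
    have hval : ∫ y in Icc 0 t, g y
        = Real.exp (-(r*t)) * ∑ k ∈ Finset.range n, (r*t)^(k+1)/(Nat.factorial (k+1)) := by
      rw [integral_Icc_eq_integral_Ioc, ← intervalIntegral.integral_of_le ht.le]
      have hgid : ∀ y : ℝ, g y = (r * Real.exp (-(r*t))) * tailSum n (r*(t-y)) := by
        intro y
        have hee : Real.exp (-(r*y)) * Real.exp (-(r*(t-y))) = Real.exp (-(r*t)) := by
          rw [← Real.exp_add]; congr 1; ring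
        rw [hgdef]
        calc r * Real.exp (-(r*y)) * (Real.exp (-(r*(t-y))) * tailSum n (r*(t-y)))
            = r * (Real.exp (-(r*y)) * Real.exp (-(r*(t-y)))) * tailSum n (r*(t-y)) := by ring
          _ = (r * Real.exp (-(r*t))) * tailSum n (r*(t-y)) := by rw [hee]
      simp only [hgid]
      rw [intervalIntegral.integral_const_mul]
      have hsum : ∫ y in (0:ℝ)..t, tailSum n (r*(t-y))
          = ∑ k ∈ Finset.range n, (r^k * t^(k+1)/(k+1))/(Nat.factorial k) := by
        simp only [tailSum]
        rw [intervalIntegral.integral_finset_sum]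
        · apply Finset.sum_congr rfl
          intro k _
          rw [intervalIntegral.integral_div]
          congr 1
          have hcomp := intervalIntegral.integral_comp_sub_left (fun x => (r*x)^k) t
            (a := 0) (b := t)
          rw [sub_self, sub_zero] at hcomp
          rw [hcomp]
          simp only [mul_pow]
          rw [intervalIntegral.integral_const_mul, integral_pow]
          rw [zero_pow (by omega)]
          ring
        · intro k _
          apply Continuous.intervalIntegrable
          fun_prop
      rw [hsum, Finset.mul_sum, Finset.mul_sum]
      apply Finset.sum_congr rfl
      intro k _
      have hfac : ((Nat.factorial (k+1)):ℝ) = ((k:ℝ)+1) * (Nat.factorial k) := by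
        push_cast [Nat.factorial_succ]; ring
      have hk1 : ((k:ℝ)+1) ≠ 0 := by positivity
      have hkf : ((Nat.factorial k):ℝ) ≠ 0 := by positivity
      rw [hfac, mul_pow]
      field_simp
      ring
    -- assemble
    rw [← hsplit, hIio, zero_add, hIci_split, hIoi, hIcc1, hIcc2, hval]
    rw [← ENNReal.ofReal_add (by positivity)
      (by positivity)]
    rw [tailF, if_pos ht.le, sumShift]
    congr 1
    have : (0:ℝ) ≤ r * t := by positivity
    rw [show r*(t:ℝ) = r*t from rfl]
    ring

lemma master (r : ℝ) (hr : 0 < r) {Ω : Type*} [MeasurableSpace Ω] (P : Measure Ω)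
    [IsProbabilityMeasure P] (Y : ℕ → Ω → ℝ) (hY : ∀ i, Measurable (Y i))
    (hind : iIndepFun Y P)
    (hlaw : ∀ i, P.map (Y i) = gammaMeasure 1 r) :
    ∀ n : ℕ, 1 ≤ n → ∀ t : ℝ,
      P {ω | t ≤ ∑ i ∈ Finset.range n, Y i ω} = ENNReal.ofReal (tailF r n t) := by
  intro n hn
  induction n, hn using Nat.le_induction with
  | base =>
      intro t
      have hset : {ω | t ≤ ∑ i ∈ Finset.range 1, Y i ω} = (Y 0) ⁻¹' (Ici t) := by
        ext ω; simp [Finset.sum_range_one]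
      rw [hset, ← Measure.map_apply (hY 0) measurableSet_Ici, hlaw 0]
      exact gamma_Ici r hr t
  | succ n hn ih =>
      intro t
      have hS : Measurable (fun ω => ∑ i ∈ Finset.range n, Y i ω) :=
        Finset.measurable_sum _ (fun i _ => hY i)
      have hIndepSY : IndepFun (fun ω => ∑ i ∈ Finset.range n, Y i ω) (Y n) P := by
        have h := hind.indepFun_sum_range_succ hY n
        have : (∑ i ∈ Finset.range n, Y i) = (fun ω => ∑ i ∈ Finset.range n, Y i ω) := by
          funext ω
          simp [Finset.sum_apply]
        rwa [this] at h
      have hmp : P.map (fun ω => ((∑ i ∈ Finset.range n, Y i ω), Y n ω))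
          = (P.map (fun ω => ∑ i ∈ Finset.range n, Y i ω)).prod (P.map (Y n)) :=
        (indepFun_iff_map_prod_eq_prod_map_map hS.aemeasurable (hY n).aemeasurable).mp hIndepSY
      have hA : MeasurableSet {p : ℝ × ℝ | t ≤ p.1 + p.2} :=
        measurableSet_le measurable_const (measurable_fst.add measurable_snd)
      have hset : {ω | t ≤ ∑ i ∈ Finset.range (n+1), Y i ω}
          = (fun ω => ((∑ i ∈ Finset.range n, Y i ω), Y n ω)) ⁻¹' {p : ℝ × ℝ | t ≤ p.1 + p.2} := by
        ext ω
        simp [Finset.sum_range_succ]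
      rw [hset, ← Measure.map_apply (hS.prodMk (hY n)) hA, hmp,
        Measure.prod_apply_symm hA]
      have hinner : ∀ y : ℝ, (P.map (fun ω => ∑ i ∈ Finset.range n, Y i ω))
          ((fun x => (x, y)) ⁻¹' {p : ℝ × ℝ | t ≤ p.1 + p.2})
            = ENNReal.ofReal (tailF r n (t - y)) := by
        intro y
        have hpre : ((fun x : ℝ => (x, y)) ⁻¹' {p : ℝ × ℝ | t ≤ p.1 + p.2}) = Ici (t - y) := by
          ext x
          simp [sub_le_iff_le_add]
        rw [hpre, Measure.map_apply hS measurableSet_Ici]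
        have := ih (t - y)
        rw [← this]
        rfl
      rw [lintegral_congr hinner, hlaw n, convStep r hr n hn t]

/-- Signal detection: tail probabilities of averages of i.i.d. Gamma(1,√2)
variables are monotone decreasing in the sample size for x > 3/(2√2). -/
theorem snr_tail_monotone
    {Ω : Type*} [MeasurableSpace Ω] (P : Measure Ω) [IsProbabilityMeasure P]
    (D : ℕ → Ω → ℝ)
    (hmeas : ∀ i, Measurable (D i))
    (hindep : iIndepFun D P)
    (hlaw : ∀ i, Measure.map (fun ω => |D i ω|) P = gammaMeasure 1 (Real.sqrt 2))
    (x : ℝ) (hx : 3 / (2 * Real.sqrt 2) < x) :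
    ∀ N : ℕ, 1 ≤ N →
      P {ω | x ≤ (1 / ((N : ℝ) + 1)) * ∑ i ∈ Finset.range (N + 1), |D i ω|} ≤
        P {ω | x ≤ (1 / (N : ℝ)) * ∑ i ∈ Finset.range N, |D i ω|} := by
  intro N hN
  have hr : (0:ℝ) < Real.sqrt 2 := Real.sqrt_pos.mpr two_pos
  set r : ℝ := Real.sqrt 2 with hrdef
  have hx0 : 0 < x := lt_trans (by positivity) hx
  have hc : 3/2 ≤ r * x := by
    have h1 : r * (3 / (2 * r)) < r * x := by
      exact mul_lt_mul_of_pos_left hx hr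
    have h2 : r * (3 / (2 * r)) = 3/2 := by
      field_simp
    linarith
  have hY : ∀ i, Measurable (fun ω => |D i ω|) := fun i => (hmeas i).abs
  have hind : iIndepFun (fun i ω => |D i ω|) P :=
    hindep.comp (fun _ => (|·|)) (fun _ => measurable_abs)
  have hm := master r hr P (fun i ω => |D i ω|) hY hind hlaw
  have hNpos : (0:ℝ) < (N:ℝ) := by exact_mod_cast hN
  have hN1pos : (0:ℝ) < (N:ℝ) + 1 := by positivity
  have hset1 : {ω : Ω | x ≤ (1 / ((N : ℝ) + 1)) * ∑ i ∈ Finset.range (N + 1), |D i ω|}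
      = {ω : Ω | ((N:ℝ)+1) * x ≤ ∑ i ∈ Finset.range (N + 1), |D i ω|} := by
    ext ω
    simp only [Set.mem_setOf_eq]
    rw [show (1 / ((N:ℝ)+1)) * ∑ i ∈ Finset.range (N + 1), |D i ω|
        = (∑ i ∈ Finset.range (N + 1), |D i ω|) / ((N:ℝ)+1) by ring,
      le_div_iff₀ hN1pos, mul_comm]
  have hset2 : {ω : Ω | x ≤ (1 / (N : ℝ)) * ∑ i ∈ Finset.range N, |D i ω|}
      = {ω : Ω | (N:ℝ) * x ≤ ∑ i ∈ Finset.range N, |D i ω|} := by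
    ext ω
    simp only [Set.mem_setOf_eq]
    rw [show (1 / (N:ℝ)) * ∑ i ∈ Finset.range N, |D i ω|
        = (∑ i ∈ Finset.range N, |D i ω|) / (N:ℝ) by ring,
      le_div_iff₀ hNpos, mul_comm]
  rw [hset1, hset2, hm (N+1) (by omega) (((N:ℝ)+1) * x), hm N hN ((N:ℝ) * x)]
  apply ENNReal.ofReal_le_ofReal
  have ht1 : (0:ℝ) ≤ ((N:ℝ)+1) * x := by positivity
  have ht2 : (0:ℝ) ≤ (N:ℝ) * x := by positivity
  rw [tailF, tailF, if_pos ht1, if_pos ht2]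
  have e1 : r * (((N:ℝ)+1) * x) = ((N:ℝ)+1) * (r*x) := by ring
  have e2 : r * ((N:ℝ) * x) = (N:ℝ) * (r*x) := by ring
  rw [e1, e2]
  have hcast : ((N+1:ℕ):ℝ) = (N:ℝ) + 1 := by push_cast; ring
  have := partC N hN (r*x) hc
  convert this using 3 <;> rw [hcast]
end

section
/- Let X_1,...,X_n be i.i.d. Gamma(α,β) with α,β>0. Suppose μ ≺ λ with common sum s, μ ≠ λ (as multisets). Then the CDFs F_μ(x) = Pr(Σ_i μ_i X_i < x) and F_λ(x) = Pr(Σ_i λ_i X_i < x) must cross at least once on (0,∞): there exist 0 < x_1 < x_2 such that F_μ(x_1) < F_λ(x_1) and F_μ(x_2) > F_λ(x_2), provided α > 1 and n ≥ 3 (or n = 2 and α > 0). -/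
open MeasureTheory ProbabilityTheory Finset

namespace CrossAux

open Real Set Filter Topology
open scoped ENNReal NNReal


lemma schur_sq_nat (n : ℕ) (l m : ℕ → ℝ)
    (hl : ∀ i j, i ≤ j → j < n → l j ≤ l i)
    (hm : ∀ i j, i ≤ j → j < n → m j ≤ m i)
    (hpart : ∀ k, k ≤ n → ∑ i ∈ range k, m i ≤ ∑ i ∈ range k, l i)
    (hsum : ∑ i ∈ range n, l i = ∑ i ∈ range n, m i)
    (hne : ∃ i, i < n ∧ m i ≠ l i) :
    ∑ i ∈ range n, m i ^ 2 < ∑ i ∈ range n, l i ^ 2 := by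
  set d : ℕ → ℝ := fun i => l i - m i with hd
  set c : ℕ → ℝ := fun i => l i + m i with hc
  set D : ℕ → ℝ := fun k => ∑ i ∈ range k, d i with hD
  have hDnn : ∀ k, k ≤ n → 0 ≤ D k := by
    intro k hk
    have := hpart k hk
    simp only [hD, hd, Finset.sum_sub_distrib]
    linarith
  have hDn : D n = 0 := by
    simp only [hD, hd, Finset.sum_sub_distrib]
    linarith
  -- least index where they differ
  have hPex : ∃ i, i < n ∧ m i ≠ l i := hne
  classical
  set k₀ := Nat.find hPex with hk₀
  obtain ⟨hk₀n, hk₀ne⟩ := Nat.find_spec hPex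
  have hbefore : ∀ i, i < k₀ → i < n → m i = l i := by
    intro i hi hin
    have := Nat.find_min hPex hi
    push_neg at this
    exact this hin
  have hDk₀ : D (k₀ + 1) = d k₀ := by
    simp only [hD, Finset.sum_range_succ]
    have : ∑ i ∈ range k₀, d i = 0 := by
      apply Finset.sum_eq_zero
      intro i hi
      simp only [Finset.mem_range] at hi
      have := hbefore i hi (hi.trans hk₀n)
      simp [hd, this]
    rw [this, zero_add]
  have hdk₀pos : 0 < d k₀ := by
    rcases lt_trichotomy (d k₀) 0 with h | h | h
    · -- then D (k₀+1) < 0, contradiction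
      have := hDnn (k₀ + 1) hk₀n
      rw [hDk₀] at this
      linarith
    · exfalso; apply hk₀ne; simp only [hd] at h; linarith
    · exact h
  -- existence of j with d j < 0
  have hjex : ∃ j, j < n ∧ d j < 0 := by
    by_contra hcon
    push_neg at hcon
    have : 0 < ∑ i ∈ range n, d i := by
      have : d k₀ ≤ ∑ i ∈ range n, d i := by
        apply Finset.single_le_sum (f := d)
        · intro i hi
          simp only [Finset.mem_range] at hi
          exact hcon i hi
        · simp only [Finset.mem_range]; exact hk₀n
      linarith
    have : ∑ i ∈ range n, d i = 0 := by
      simp only [hd, Finset.sum_sub_distrib]; linarith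
    linarith
  set j₀ := Nat.find hjex with hj₀
  obtain ⟨hj₀n, hj₀neg⟩ := Nat.find_spec hjex
  have hdnn : ∀ i, i < j₀ → i < n → 0 ≤ d i := by
    intro i hi hin
    have := Nat.find_min hjex hi
    push_neg at this
    exact this hin
  have hk₀j₀ : k₀ < j₀ := by
    rcases lt_trichotomy k₀ j₀ with h | h | h
    · exact h
    · exfalso; rw [h] at hdk₀pos; linarith
    · exfalso
      have := hbefore j₀ h hj₀n
      have : d j₀ = 0 := by simp [hd, this]
      linarith
  have hcdiff : 0 < c k₀ - c j₀ := by
    have h1 : l j₀ ≤ l k₀ := hl k₀ j₀ hk₀j₀.le hj₀n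
    have h2 : m j₀ ≤ m k₀ := hm k₀ j₀ hk₀j₀.le hj₀n
    simp only [hc, hd] at *
    by_contra hcon
    push_neg at hcon
    have hl' : l k₀ = l j₀ := by linarith
    have hm' : m k₀ = m j₀ := by linarith
    linarith
  -- Abel summation
  have habel : ∑ i ∈ range n, c i * d i
      = c (n-1) * D n - ∑ i ∈ range (n-1), (c (i+1) - c i) * D (i+1) := by
    simpa only [smul_eq_mul, hD] using Finset.sum_range_by_parts c d n
  have key : ∑ i ∈ range n, c i * d i = ∑ i ∈ range n, l i ^ 2 - ∑ i ∈ range n, m i ^ 2 := by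
    rw [← Finset.sum_sub_distrib]
    apply Finset.sum_congr rfl
    intro i _
    simp only [hc, hd]; ring
  have hj₀le : j₀ ≤ n - 1 := by omega
  set f : ℕ → ℝ := fun i => if k₀ ≤ i ∧ i < j₀ then (c i - c (i+1)) * d k₀ else 0 with hf
  have hterm : ∀ i ∈ range (n-1), f i ≤ (c i - c (i+1)) * D (i+1) := by
    intro i hi
    simp only [Finset.mem_range] at hi
    have hcstep : 0 ≤ c i - c (i+1) := by
      have h1 : l (i+1) ≤ l i := hl i (i+1) (Nat.le_succ i) (by omega)
      have h2 : m (i+1) ≤ m i := hm i (i+1) (Nat.le_succ i) (by omega)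
      simp only [hc]; linarith
    by_cases hcond : k₀ ≤ i ∧ i < j₀
    · have hDbig : d k₀ ≤ D (i+1) := by
        apply Finset.single_le_sum (f := d)
        · intro t ht
          simp only [Finset.mem_range] at ht
          exact hdnn t (by omega) (by omega)
        · simp only [Finset.mem_range]; omega
      simp only [hf, if_pos hcond]
      exact mul_le_mul_of_nonneg_left hDbig hcstep
    · simp only [hf, if_neg hcond]
      exact mul_nonneg hcstep (hDnn (i+1) (by omega))
  have hsumf : ∑ i ∈ range (n-1), f i = (c k₀ - c j₀) * d k₀ := by
    have h1 : ∑ i ∈ range (n-1), f i = ∑ i ∈ Ico k₀ j₀, (c i - c (i+1)) * d k₀ := by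
      rw [hf, Finset.sum_ite, Finset.sum_const_zero, add_zero]
      apply Finset.sum_congr _ (fun _ _ => rfl)
      ext t
      simp only [Finset.mem_filter, Finset.mem_range, Finset.mem_Ico]
      omega
    rw [h1, ← Finset.sum_mul]
    congr 1
    have h2 : ∑ i ∈ Ico k₀ j₀, (c (i+1) - c i) = c j₀ - c k₀ := by
      rw [Finset.sum_Ico_eq_sub _ hk₀j₀.le, Finset.sum_range_sub, Finset.sum_range_sub]
      ring
    have h3 : ∑ i ∈ Ico k₀ j₀, (c i - c (i+1)) = -∑ i ∈ Ico k₀ j₀, (c (i+1) - c i) := by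
      rw [← Finset.sum_neg_distrib]
      apply Finset.sum_congr rfl; intro i _; ring
    rw [h3, h2]; ring
  have hpos : 0 < ∑ i ∈ range (n-1), (c i - c (i+1)) * D (i+1) := by
    calc (0:ℝ) < (c k₀ - c j₀) * d k₀ := mul_pos hcdiff hdk₀pos
    _ = ∑ i ∈ range (n-1), f i := hsumf.symm
    _ ≤ ∑ i ∈ range (n-1), (c i - c (i+1)) * D (i+1) := Finset.sum_le_sum hterm
  have hrw : ∑ i ∈ range (n-1), (c (i+1) - c i) * D (i+1)
      = -∑ i ∈ range (n-1), (c i - c (i+1)) * D (i+1) := by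
    rw [← Finset.sum_neg_distrib]
    apply Finset.sum_congr rfl; intro i _; ring
  rw [key, hDn, hrw] at habel
  linarith

lemma schur_sq_fin {n : ℕ} (lam mu : Fin n → ℝ)
    (hlmono : Antitone lam) (hmmono : Antitone mu)
    (hpartial : ∀ k : ℕ, k < n →
      ∑ i ∈ univ.filter (fun i : Fin n => (i : ℕ) < k), mu i ≤
        ∑ i ∈ univ.filter (fun i : Fin n => (i : ℕ) < k), lam i)
    (hsum : ∑ i, lam i = ∑ i, mu i) (hne : mu ≠ lam) :
    ∑ i, mu i ^ 2 < ∑ i, lam i ^ 2 := by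
  classical
  set l : ℕ → ℝ := fun i => if h : i < n then lam ⟨i, h⟩ else 0 with hldef
  set m : ℕ → ℝ := fun i => if h : i < n then mu ⟨i, h⟩ else 0 with hmdef
  have hlv : ∀ i : Fin n, l i = lam i := by
    intro i; simp only [hldef, dif_pos i.isLt, Fin.eta]
  have hmv : ∀ i : Fin n, m i = mu i := by
    intro i; simp only [hmdef, dif_pos i.isLt, Fin.eta]
  have hsum_l : ∀ g : Fin n → ℝ, ∀ g' : ℕ → ℝ, (∀ i : Fin n, g' i = g i) →
      ∑ i, g i = ∑ i ∈ range n, g' i := by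
    intro g g' hg
    rw [← Fin.sum_univ_eq_sum_range]
    exact Finset.sum_congr rfl (fun i _ => (hg i).symm)
  have hfilter : ∀ (g : Fin n → ℝ) (g' : ℕ → ℝ), (∀ i : Fin n, g' i = g i) → ∀ k, k ≤ n →
      ∑ i ∈ univ.filter (fun i : Fin n => (i : ℕ) < k), g i = ∑ i ∈ range k, g' i := by
    intro g g' hg k hk
    rw [Finset.sum_filter]
    have h1 : ∑ i : Fin n, (if (i : ℕ) < k then g i else 0)
        = ∑ i ∈ range n, (if i < k then g' i else 0) := by
      rw [← Fin.sum_univ_eq_sum_range]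
      exact Finset.sum_congr rfl (fun i _ => by rw [hg])
    rw [h1, ← Finset.sum_filter]
    apply Finset.sum_congr _ (fun _ _ => rfl)
    ext t; simp only [Finset.mem_filter, Finset.mem_range]; omega
  have main := schur_sq_nat n l m
    (fun i j hij hjn => by
      simp only [hldef]
      rw [dif_pos hjn, dif_pos (lt_of_le_of_lt hij hjn)]
      exact hlmono (by exact_mod_cast hij))
    (fun i j hij hjn => by
      simp only [hmdef]
      rw [dif_pos hjn, dif_pos (lt_of_le_of_lt hij hjn)]
      exact hmmono (by exact_mod_cast hij))
    (fun k hk => by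
      rcases lt_or_eq_of_le hk with hk' | hk'
      · rw [← hfilter mu m hmv k hk, ← hfilter lam l hlv k hk]
        exact hpartial k hk'
      · subst hk'
        rw [← hsum_l lam l hlv, ← hsum_l mu m hmv, hsum])
    (by rw [← hsum_l lam l hlv, ← hsum_l mu m hmv, hsum])
    (by
      rw [Function.ne_iff] at hne
      obtain ⟨i, hi⟩ := hne
      exact ⟨i, i.isLt, by rw [hmv, hlv]; exact hi⟩)
  rw [hsum_l (fun i => mu i ^ 2) (fun i => m i ^ 2) (fun i => by rw [hmv]),
    hsum_l (fun i => lam i ^ 2) (fun i => l i ^ 2) (fun i => by rw [hlv])]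
  exact main

variable {a r : ℝ}

lemma gammaMeasure_Iio_zero (a r : ℝ) : gammaMeasure a r (Iio 0) = 0 := by
  rw [gammaMeasure, withDensity_apply _ measurableSet_Iio]
  exact lintegral_gammaPDF_of_nonpos le_rfl

lemma pdf_integrableOn (ha : 0 < a) (hr : 0 < r) (p : ℕ) :
    IntegrableOn (fun x : ℝ => gammaPDFReal a r x * x ^ p) (Ici 0) := by
  rw [integrableOn_Ici_iff_integrableOn_Ioi]
  have hp0 : (0:ℝ) ≤ p := Nat.cast_nonneg p
  have base : IntegrableOn (fun x : ℝ => x ^ (a + p - 1) * exp (-r * x ^ (1:ℝ))) (Ioi 0) :=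
    integrableOn_rpow_mul_exp_neg_mul_rpow (by linarith) one_pos hr
  have : IntegrableOn (fun x : ℝ => r ^ a / Real.Gamma a *
      (x ^ (a + p - 1) * exp (-r * x ^ (1:ℝ)))) (Ioi 0) := base.const_mul _
  apply this.congr_fun _ measurableSet_Ioi
  intro x hx
  have hx0 : 0 < x := hx
  simp only [gammaPDFReal, if_pos hx0.le, rpow_one]
  have hxp : (x:ℝ) ^ p = x ^ (p:ℝ) := (rpow_natCast x p).symm
  rw [hxp, mul_assoc, mul_assoc]
  congr 1
  rw [show a + p - 1 = (a - 1) + (p:ℝ) by ring, rpow_add hx0, neg_mul]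
  ring

lemma gamma_integral_eq (ha : 0 < a) (hr : 0 < r) (g : ℝ → ℝ) :
    ∫ x, g x ∂(gammaMeasure a r) = ∫ x, gammaPDFReal a r x * g x := by
  have hrw : gammaMeasure a r
      = volume.withDensity (fun x => ((Real.toNNReal (gammaPDFReal a r x) : ℝ≥0) : ℝ≥0∞)) := rfl
  rw [hrw, integral_withDensity_eq_integral_smul
    (measurable_gammaPDFReal a r).real_toNNReal g]
  apply integral_congr_ae
  filter_upwards with x
  rw [NNReal.smul_def, smul_eq_mul, Real.coe_toNNReal _ (gammaPDFReal_nonneg ha hr x)]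

lemma gamma_integral_pow (ha : 0 < a) (hr : 0 < r) (p : ℕ) :
    ∫ x, x ^ p ∂(gammaMeasure a r) = Real.Gamma (a + p) / Real.Gamma a * (1/r) ^ (p:ℝ) := by
  rw [gamma_integral_eq ha hr]
  rw [← setIntegral_eq_integral_of_forall_compl_eq_zero
    (s := Ici 0) (fun x hx => by
      simp only [Set.mem_Ici, not_le] at hx
      simp [gammaPDFReal, not_le.mpr hx])]
  rw [integral_Ici_eq_integral_Ioi]
  have hcong : ∀ x ∈ Ioi (0:ℝ), gammaPDFReal a r x * x ^ p
      = r ^ a / Real.Gamma a * (x ^ (a + p - 1) * exp (-(r * x))) := by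
    intro x hx
    have hx0 : 0 < x := hx
    simp only [gammaPDFReal, if_pos hx0.le]
    rw [show (x:ℝ) ^ p = x ^ (p:ℝ) from (rpow_natCast x p).symm,
      show a + (p:ℝ) - 1 = (a - 1) + (p:ℝ) by ring, rpow_add hx0]
    ring
  have hp0 : (0:ℝ) ≤ p := Nat.cast_nonneg p
  rw [setIntegral_congr_fun measurableSet_Ioi hcong, integral_const_mul,
    integral_rpow_mul_exp_neg_mul_Ioi (by linarith) hr]
  have h1 : (1/r) ^ (a + (p:ℝ)) = (1/r) ^ a * (1/r) ^ (p:ℝ) := rpow_add (by positivity) _ _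
  have h2 : r ^ a * (1/r) ^ a = 1 := by
    rw [one_div, Real.inv_rpow hr.le]
    exact mul_inv_cancel₀ (rpow_pos_of_pos hr a).ne'
  have hg : Real.Gamma a ≠ 0 := (Real.Gamma_pos_of_pos ha).ne'
  rw [h1]
  field_simp
  linear_combination h2

lemma gamma_integrable_pow (ha : 0 < a) (hr : 0 < r) (p : ℕ) :
    Integrable (fun x : ℝ => x ^ p) (gammaMeasure a r) := by
  have hmp : Measurable (gammaPDF a r) := (measurable_gammaPDFReal a r).ennreal_ofReal
  rw [gammaMeasure, integrable_withDensity_iff hmp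
    (ae_of_all _ fun x => ENNReal.ofReal_lt_top)]
  have htr : ∀ x : ℝ, (gammaPDF a r x).toReal = gammaPDFReal a r x := fun x =>
    ENNReal.toReal_ofReal (gammaPDFReal_nonneg ha hr x)
  have : (fun x : ℝ => x ^ p * (gammaPDF a r x).toReal)
      = fun x => gammaPDFReal a r x * x ^ p := by
    funext x; rw [htr, mul_comm]
  rw [this]
  have hint := pdf_integrableOn ha hr p
  rw [← integrable_indicator_iff measurableSet_Ici] at hint
  apply hint.congr
  filter_upwards with x
  rcases le_or_gt 0 x with h | h
  · rw [Set.indicator_of_mem (show x ∈ Set.Ici 0 from h)]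
  · rw [Set.indicator_of_notMem (show x ∉ Set.Ici 0 by simpa using h)]
    simp [gammaPDFReal, not_le.mpr h]


variable {Ω : Type*} [MeasurableSpace Ω] (P : Measure Ω) [IsProbabilityMeasure P]
variable {W V : Ω → ℝ}

lemma tail_antitone (hW : Measurable W) :
    Antitone (fun t : ℝ => P {ω | t < W ω}) := fun _ _ hst =>
  measure_mono (fun _ h => lt_of_le_of_lt hst h)

lemma tail_meas (hW : Measurable W) :
    Measurable (fun t : ℝ => (P {ω | t < W ω}).toReal) :=
  ((tail_antitone P hW).measurable).ennreal_toReal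

lemma layer1 (hW : Measurable W) (hWi : Integrable W P) (hnn : 0 ≤ᵐ[P] W) :
    IntegrableOn (fun t => (P {ω | t < W ω}).toReal) (Ioi 0) ∧
    ∫ t in Ioi 0, (P {ω | t < W ω}).toReal = ∫ ω, W ω ∂P := by
  constructor
  · refine ⟨(tail_meas P hW).aestronglyMeasurable, ?_⟩
    rw [hasFiniteIntegral_iff_norm]
    have hcong : ∀ᵐ t ∂(volume.restrict (Ioi 0)),
        ENNReal.ofReal ‖(P {ω | t < W ω}).toReal‖ = P {ω | t < W ω} := by
      filter_upwards with t
      rw [Real.norm_of_nonneg ENNReal.toReal_nonneg,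
        ENNReal.ofReal_toReal (measure_ne_top P _)]
    rw [lintegral_congr_ae hcong, ← lintegral_eq_lintegral_meas_lt P hnn hW.aemeasurable]
    exact hWi.lintegral_lt_top
  · exact (hWi.integral_eq_integral_meas_lt hnn).symm

lemma layer2 (hW : Measurable W) (hW2 : Integrable (fun ω => W ω ^ 2) P) (hnn : 0 ≤ᵐ[P] W) :
    IntegrableOn (fun t => t * (P {ω | t < W ω}).toReal) (Ioi 0) ∧
    ∫ t in Ioi 0, t * (P {ω | t < W ω}).toReal = (∫ ω, W ω ^ 2 ∂P) / 2 := by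
  have key := lintegral_comp_eq_lintegral_meas_lt_mul P (f := W) (g := fun t => t) hnn
    hW.aemeasurable (fun t _ => intervalIntegral.intervalIntegrable_id)
    ((ae_restrict_iff' measurableSet_Ioi).mpr (ae_of_all _ fun t ht => le_of_lt ht))
  have hid : ∀ ω, ENNReal.ofReal (∫ t in (0:ℝ)..W ω, t) = ENNReal.ofReal (W ω ^ 2 / 2) := by
    intro ω
    rw [integral_id]
    norm_num
  simp_rw [hid] at key
  have hrhs : ∫⁻ t in Ioi 0, P {ω | t < W ω} * ENNReal.ofReal t
      = ∫⁻ t in Ioi 0, ENNReal.ofReal (t * (P {ω | t < W ω}).toReal) := by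
    apply setLIntegral_congr_fun measurableSet_Ioi
    intro t ht
    beta_reduce
    rw [ENNReal.ofReal_mul (le_of_lt ht), ENNReal.ofReal_toReal (measure_ne_top P _), mul_comm]
  rw [hrhs] at key
  have hfin : ∫⁻ ω, ENNReal.ofReal (W ω ^ 2 / 2) ∂P < ∞ := (hW2.div_const 2).lintegral_lt_top
  have hmeasF : Measurable (fun t : ℝ => t * (P {ω | t < W ω}).toReal) :=
    measurable_id.mul (tail_meas P hW)
  have hFnn : ∀ᵐ t ∂(volume.restrict (Ioi 0)), 0 ≤ t * (P {ω | t < W ω}).toReal :=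
    (ae_restrict_iff' measurableSet_Ioi).mpr (ae_of_all _ fun t ht =>
      mul_nonneg (le_of_lt ht) ENNReal.toReal_nonneg)
  have hFint : IntegrableOn (fun t => t * (P {ω | t < W ω}).toReal) (Ioi 0) := by
    refine ⟨hmeasF.aestronglyMeasurable, ?_⟩
    rw [hasFiniteIntegral_iff_norm]
    have hcong : ∀ᵐ t ∂(volume.restrict (Ioi 0)),
        ENNReal.ofReal ‖t * (P {ω | t < W ω}).toReal‖
          = ENNReal.ofReal (t * (P {ω | t < W ω}).toReal) := by
      filter_upwards [hFnn] with t ht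
      rw [Real.norm_of_nonneg ht]
    rw [lintegral_congr_ae hcong, ← key]
    exact hfin
  refine ⟨hFint, ?_⟩
  have h1 : ∫ ω, W ω ^ 2 / 2 ∂P
      = (∫⁻ ω, ENNReal.ofReal (W ω ^ 2 / 2) ∂P).toReal := by
    rw [integral_eq_lintegral_of_nonneg_ae (ae_of_all _ fun ω => by positivity)
      (((hW.pow_const 2).div_const 2).aestronglyMeasurable)]
  have h2 : ∫ t in Ioi 0, t * (P {ω | t < W ω}).toReal
      = (∫⁻ t in Ioi 0, ENNReal.ofReal (t * (P {ω | t < W ω}).toReal)).toReal := by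
    rw [integral_eq_lintegral_of_nonneg_ae hFnn hmeasF.aestronglyMeasurable.restrict]
  rw [h2, ← key, ← h1, ← integral_div]

lemma bridge (hW : Measurable W) (hV : Measurable V) {a b : ℝ} (hab : a < b)
    (h : P {ω | W ω ≤ a} < P {ω | V ω ≤ a}) :
    ∃ x, a < x ∧ x < b ∧ P {ω | W ω < x} < P {ω | V ω < x} := by
  have hiInter : ⋂ n : ℕ, {ω | W ω < a + 1/(n+1)} = {ω | W ω ≤ a} := by
    ext ω
    simp only [mem_iInter, mem_setOf_eq]
    constructor
    · intro hall
      by_contra hcon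
      push_neg at hcon
      obtain ⟨n, hn⟩ := exists_nat_one_div_lt (show 0 < W ω - a by linarith)
      have := hall n
      push_cast at this hn ⊢
      linarith
    · intro hle n
      have : (0:ℝ) < 1/(n+1) := by positivity
      linarith
  have htend : Tendsto (fun n : ℕ => P {ω | W ω < a + 1/(n+1)}) atTop
      (𝓝 (P {ω | W ω ≤ a})) := by
    rw [← hiInter]
    apply tendsto_measure_iInter_atTop
    · intro n
      exact (measurableSet_lt hW measurable_const).nullMeasurableSet
    · intro i j hij
      apply Set.setOf_subset_setOf.mpr
      intro ω hω
      have h1 : (1:ℝ)/(j+1) ≤ 1/(i+1) := by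
        apply one_div_le_one_div_of_le (by positivity)
        push_cast
        linarith [(Nat.cast_le (α := ℝ)).mpr hij]
      linarith
    · exact ⟨0, measure_ne_top P _⟩
  have he1 : ∀ᶠ n : ℕ in atTop, P {ω | W ω < a + 1/(n+1)} < P {ω | V ω ≤ a} :=
    htend.eventually_lt_const h
  have he2 : ∀ᶠ n : ℕ in atTop, a + 1/(n+1) < b := by
    have : Tendsto (fun n : ℕ => a + 1/(n+1) : ℕ → ℝ) atTop (𝓝 (a + 0)) :=
      tendsto_const_nhds.add (tendsto_one_div_add_atTop_nhds_zero_nat)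
    rw [add_zero] at this
    exact this.eventually_lt_const hab
  obtain ⟨n, hn1, hn2⟩ := (he1.and he2).exists
  have hpos : (0:ℝ) < 1/(n+1) := by positivity
  refine ⟨a + 1/(n+1), by linarith, hn2, ?_⟩
  calc P {ω | W ω < a + 1/(n+1)} < P {ω | V ω ≤ a} := hn1
  _ ≤ P {ω | V ω < a + 1/(n+1)} := measure_mono (fun ω hω => by
      simp only [mem_setOf_eq] at *
      have : (0:ℝ) < 1/(n+1) := by positivity
      linarith)

lemma gamma_val_one (ha : 0 < a) (hr : 0 < r) :
    ∫ x : ℝ, x ∂(gammaMeasure a r) = a / r := by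
  have h := gamma_integral_pow ha hr 1
  rw [Nat.cast_one, rpow_one, Real.Gamma_add_one ha.ne'] at h
  simp only [pow_one] at h
  rw [h]
  have hΓ : Real.Gamma a ≠ 0 := (Real.Gamma_pos_of_pos ha).ne'
  field_simp
lemma gamma_val_two (ha : 0 < a) (hr : 0 < r) :
    ∫ x : ℝ, x ^ 2 ∂(gammaMeasure a r) = a * (a + 1) / r ^ 2 := by
  have h := gamma_integral_pow ha hr 2
  rw [show a + ((2:ℕ):ℝ) = (a + 1) + 1 by push_cast; ring,
    Real.Gamma_add_one (by linarith), Real.Gamma_add_one ha.ne',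
    rpow_natCast] at h
  rw [h]
  have hΓ : Real.Gamma a ≠ 0 := (Real.Gamma_pos_of_pos ha).ne'
  field_simp

variable {Ω : Type*} [MeasurableSpace Ω] {P : Measure Ω} [IsProbabilityMeasure P]

lemma law_facts {X : Ω → ℝ} (hX : Measurable X)
    (hlaw : Measure.map X P = gammaMeasure a r) (ha : 0 < a) (hr : 0 < r) :
    Integrable X P ∧ Integrable (fun ω => X ω ^ 2) P ∧
    (∫ ω, X ω ∂P = a / r) ∧ (∫ ω, X ω ^ 2 ∂P = a * (a + 1) / r ^ 2) ∧
    (0 ≤ᵐ[P] X) := by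
  have hid : AEStronglyMeasurable (fun x : ℝ => x) (Measure.map X P) :=
    measurable_id.aestronglyMeasurable
  have hsq : AEStronglyMeasurable (fun x : ℝ => x ^ 2) (Measure.map X P) :=
    (measurable_id.pow_const 2).aestronglyMeasurable
  have hint1 : Integrable (fun x : ℝ => x) (Measure.map X P) := by
    rw [hlaw]
    simpa [pow_one] using gamma_integrable_pow ha hr 1
  have hint2 : Integrable (fun x : ℝ => x ^ 2) (Measure.map X P) := by
    rw [hlaw]; exact gamma_integrable_pow ha hr 2
  refine ⟨?_, ?_, ?_, ?_, ?_⟩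
  · have := (integrable_map_measure hid hX.aemeasurable).mp hint1
    exact this
  · have := (integrable_map_measure hsq hX.aemeasurable).mp hint2
    exact this
  · have := integral_map hX.aemeasurable hid
    rw [← this, hlaw]
    exact gamma_val_one ha hr
  · have := integral_map hX.aemeasurable hsq
    rw [← this, hlaw]
    exact gamma_val_two ha hr
  · have h0 : P {ω | X ω < 0} = 0 := by
      have := Measure.map_apply (μ := P) hX (measurableSet_Iio (a := (0:ℝ)))
      rw [hlaw, gammaMeasure_Iio_zero] at this
      simpa [Set.preimage, Set.Iio] using this.symm
    rw [EventuallyLE, ae_iff]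
    convert h0 using 2
    ext ω
    simp


lemma cdf_tail {Ω : Type*} [MeasurableSpace Ω] (P : Measure Ω) [IsProbabilityMeasure P]
    {W : Ω → ℝ} (hW : Measurable W) (a : ℝ) :
    (P {ω | W ω ≤ a}).toReal = 1 - (P {ω | a < W ω}).toReal := by
  have hms : MeasurableSet {ω | W ω ≤ a} := measurableSet_le hW measurable_const
  have hc : {ω | a < W ω} = {ω | W ω ≤ a}ᶜ := by ext ω; simp [not_le]
  have hadd := measure_add_measure_compl (μ := P) hms
  rw [measure_univ] at hadd
  have htr := congrArg ENNReal.toReal hadd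
  rw [ENNReal.toReal_add (measure_ne_top P _) (measure_ne_top P _), ENNReal.toReal_one] at htr
  rw [hc]
  linarith

end CrossAux

/-- If μ ≺ λ with μ ≠ λ then the CDFs of the two gamma convolutions cross at
least once on (0,∞) (for α > 1, n ≥ 3, or for n = 2). -/
theorem gamma_convolution_cdfs_cross
    {Ω : Type*} [MeasurableSpace Ω] (P : Measure Ω) [IsProbabilityMeasure P]
    (n : ℕ) (X : Fin n → Ω → ℝ) (α β : ℝ) (hα : 0 < α) (hβ : 0 < β)
    (hmeas : ∀ i, Measurable (X i))
    (hindep : iIndepFun X P)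
    (hlaw : ∀ i, Measure.map (X i) P = gammaMeasure α β)
    (lam mu : Fin n → ℝ) (s : ℝ)
    (hlmono : Antitone lam) (hlnn : ∀ i, 0 ≤ lam i)
    (hmmono : Antitone mu) (hmpos : ∀ i, 0 < mu i)
    (hpartial : ∀ k : ℕ, k < n →
      ∑ i ∈ univ.filter (fun i : Fin n => (i : ℕ) < k), mu i ≤
        ∑ i ∈ univ.filter (fun i : Fin n => (i : ℕ) < k), lam i)
    (hsl : ∑ i, lam i = s) (hsm : ∑ i, mu i = s)
    (hne : mu ≠ lam)
    (hcase : (1 < α ∧ 3 ≤ n) ∨ n = 2) :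
    ∃ x₁ x₂ : ℝ, 0 < x₁ ∧ x₁ < x₂ ∧
      P {ω | ∑ i, mu i * X i ω < x₁} < P {ω | ∑ i, lam i * X i ω < x₁} ∧
      P {ω | ∑ i, lam i * X i ω < x₂} < P {ω | ∑ i, mu i * X i ω < x₂} := by
  classical
  have hfacts := fun i => CrossAux.law_facts (P := P) (hmeas i) (hlaw i) hα hβ
  set m1 : ℝ := α / β with hm1
  set m2 : ℝ := α * (α + 1) / β ^ 2 with hm2
  have hInt1 : ∀ i, Integrable (X i) P := fun i => (hfacts i).1
  have hInt2 : ∀ i, Integrable (fun ω => X i ω ^ 2) P := fun i => (hfacts i).2.1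
  have hE1 : ∀ i, ∫ ω, X i ω ∂P = m1 := fun i => (hfacts i).2.2.1
  have hE2 : ∀ i, ∫ ω, X i ω ^ 2 ∂P = m2 := fun i => (hfacts i).2.2.2.1
  have hXnn : ∀ i, 0 ≤ᵐ[P] X i := fun i => (hfacts i).2.2.2.2
  set Y : Ω → ℝ := fun ω => ∑ i, mu i * X i ω with hYdef
  set Z : Ω → ℝ := fun ω => ∑ i, lam i * X i ω with hZdef
  have hmY : Measurable Y := Finset.measurable_sum univ (fun i _ => (hmeas i).const_mul (mu i))
  have hmZ : Measurable Z := Finset.measurable_sum univ (fun i _ => (hmeas i).const_mul (lam i))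
  have hYint : Integrable Y P := integrable_finset_sum _ (fun i _ => (hInt1 i).const_mul (mu i))
  have hZint : Integrable Z P := integrable_finset_sum _ (fun i _ => (hInt1 i).const_mul (lam i))
  have hEsum : ∀ c : Fin n → ℝ, ∫ ω, ∑ i, c i * X i ω ∂P = (∑ i, c i) * m1 := by
    intro c
    rw [integral_finset_sum _ (fun i _ => (hInt1 i).const_mul (c i))]
    rw [Finset.sum_congr rfl (fun i (_ : i ∈ univ) => by
      rw [integral_const_mul, hE1 i])]
    rw [← Finset.sum_mul]
  have hEY : ∫ ω, Y ω ∂P = s * m1 := by rw [hYdef]; rw [hEsum mu, hsm]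
  have hEZ : ∫ ω, Z ω ∂P = s * m1 := by rw [hZdef]; rw [hEsum lam, hsl]
  -- pairwise products
  have hIntPair : ∀ i j, Integrable (fun ω => X i ω * X j ω) P := by
    intro i j
    by_cases h : i = j
    · subst h; simpa [pow_two] using hInt2 i
    · exact (hindep.indepFun h).integrable_mul (hInt1 i) (hInt1 j)
  have hEPair : ∀ i j, ∫ ω, X i ω * X j ω ∂P = if i = j then m2 else m1 ^ 2 := by
    intro i j
    by_cases h : i = j
    · subst h
      rw [if_pos rfl]
      simp only [← pow_two]
      exact hE2 i
    · rw [if_neg h]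
      have := (hindep.indepFun h).integral_mul_eq_mul_integral (hInt1 i).aestronglyMeasurable (hInt1 j).aestronglyMeasurable
      rw [hE1 i, hE1 j] at this
      rw [show (∫ ω, X i ω * X j ω ∂P) = ∫ ω, (X i * X j) ω ∂P from rfl]
      rw [this]; ring
  have hsum_mul : ∀ c : Fin n → ℝ, (fun ω => (∑ i, c i * X i ω) ^ 2)
      = fun ω => ∑ i, ∑ j, (c i * c j) * (X i ω * X j ω) := by
    intro c
    funext ω
    rw [sq, Finset.sum_mul_sum]
    exact Finset.sum_congr rfl (fun i _ => Finset.sum_congr rfl (fun j _ => by ring))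
  have hsq2 : ∀ c : Fin n → ℝ, Integrable (fun ω => (∑ i, c i * X i ω) ^ 2) P ∧
      ∫ ω, (∑ i, c i * X i ω) ^ 2 ∂P
        = m1 ^ 2 * (∑ i, c i) ^ 2 + (m2 - m1 ^ 2) * ∑ i, c i ^ 2 := by
    intro c
    have hint : ∀ i (_ : i ∈ univ), Integrable (fun ω => ∑ j, (c i * c j) * (X i ω * X j ω)) P :=
      fun i _ => integrable_finset_sum _ (fun j _ => (hIntPair i j).const_mul _)
    constructor
    · rw [hsum_mul c]
      exact integrable_finset_sum _ hint
    · rw [hsum_mul c, integral_finset_sum _ hint]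
      have hinner : ∀ i, ∫ ω, ∑ j, (c i * c j) * (X i ω * X j ω) ∂P
          = ∑ j, (c i * c j) * (if i = j then m2 else m1 ^ 2) := by
        intro i
        rw [integral_finset_sum _ (fun j _ => (hIntPair i j).const_mul _)]
        exact Finset.sum_congr rfl (fun j _ => by rw [integral_const_mul, hEPair i j])
      rw [Finset.sum_congr rfl (fun i _ => hinner i)]
      have hsplit : ∀ i j : Fin n, (c i * c j) * (if i = j then m2 else m1 ^ 2)
          = (c i * c j) * m1 ^ 2 + (if i = j then c j ^ 2 * (m2 - m1 ^ 2) else 0) := by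
        intro i j
        by_cases h : i = j
        · subst h
          rw [if_pos rfl, if_pos rfl]
          ring
        · rw [if_neg h, if_neg h]
          ring
      simp_rw [hsplit, Finset.sum_add_distrib, Finset.sum_ite_eq]
      simp only [Finset.mem_univ, if_true]
      rw [show ∑ i, ∑ j, c i * c j * m1 ^ 2 = (∑ i, ∑ j, c i * c j) * m1 ^ 2 by
        rw [Finset.sum_mul]; exact Finset.sum_congr rfl (fun i _ => by rw [Finset.sum_mul]),
        ← Finset.sum_mul_sum, show ∑ i : Fin n, c i ^ 2 * (m2 - m1 ^ 2)
          = (∑ i : Fin n, c i ^ 2) * (m2 - m1 ^ 2) from (Finset.sum_mul _ _ _).symm]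
      ring
  have hY2int : Integrable (fun ω => Y ω ^ 2) P := (hsq2 mu).1
  have hZ2int : Integrable (fun ω => Z ω ^ 2) P := (hsq2 lam).1
  have hSchur : ∑ i, mu i ^ 2 < ∑ i, lam i ^ 2 :=
    CrossAux.schur_sq_fin lam mu hlmono hmmono hpartial (by rw [hsl, hsm]) hne
  have hm2m1 : 0 < m2 - m1 ^ 2 := by
    rw [hm1, hm2]
    have : α * (α + 1) / β ^ 2 - (α / β) ^ 2 = α / β ^ 2 := by field_simp; ring
    rw [this]
    positivity
  have hE2lt : ∫ ω, Y ω ^ 2 ∂P < ∫ ω, Z ω ^ 2 ∂P := by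
    rw [hYdef, hZdef, (hsq2 mu).2, (hsq2 lam).2, hsl, hsm]
    have := mul_lt_mul_of_pos_left hSchur hm2m1
    linarith
  have hYnn : 0 ≤ᵐ[P] Y := by
    filter_upwards [ae_all_iff.mpr hXnn] with ω hω
    exact Finset.sum_nonneg fun i _ => mul_nonneg (hmpos i).le (hω i)
  have hZnn : 0 ≤ᵐ[P] Z := by
    filter_upwards [ae_all_iff.mpr hXnn] with ω hω
    exact Finset.sum_nonneg fun i _ => mul_nonneg (hlnn i) (hω i)
  -- layer cake
  obtain ⟨LY1, EY1⟩ := CrossAux.layer1 P hmY hYint hYnn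
  obtain ⟨LZ1, EZ1⟩ := CrossAux.layer1 P hmZ hZint hZnn
  obtain ⟨LY2, EY2⟩ := CrossAux.layer2 P hmY hY2int hYnn
  obtain ⟨LZ2, EZ2⟩ := CrossAux.layer2 P hmZ hZ2int hZnn
  set TY : ℝ → ℝ := fun t => (P {ω | t < Y ω}).toReal with hTY
  set TZ : ℝ → ℝ := fun t => (P {ω | t < Z ω}).toReal with hTZ
  set D : ℝ → ℝ := fun t => TZ t - TY t with hDdef
  have hDint : IntegrableOn D (Set.Ioi 0) := LZ1.sub LY1
  have hD0 : ∫ t in Set.Ioi 0, D t = 0 := by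
    rw [hDdef]
    simp only []
    rw [integral_sub LZ1 LY1, EY1, EZ1, hEY, hEZ, sub_self]
  have htDint : IntegrableOn (fun t => t * D t) (Set.Ioi 0) := by
    have : (fun t => t * D t) = fun t => t * TZ t - t * TY t := by
      funext t; rw [hDdef]; ring
    rw [this]
    exact LZ2.sub LY2
  have hD1 : 0 < ∫ t in Set.Ioi 0, t * D t := by
    have : (fun t => t * D t) = fun t => t * TZ t - t * TY t := by
      funext t; rw [hDdef]; ring
    rw [this, integral_sub LZ2 LY2, EY2, EZ2]
    linarith
  by_contra hcon
  push_neg at hcon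
  -- single-crossing pattern for D
  have Hsign : ∀ a b : ℝ, 0 < a → a < b → D a < 0 → ¬(0 < D b) := by
    intro a b ha hab hDa hDb
    have hTa : TZ a < TY a := by
      rw [hDdef] at hDa; simp only [] at hDa; linarith
    have hTb : TY b < TZ b := by
      rw [hDdef] at hDb; simp only [] at hDb; linarith
    have hle_a : P {ω | Y ω ≤ a} < P {ω | Z ω ≤ a} := by
      apply (ENNReal.toReal_lt_toReal (measure_ne_top P _) (measure_ne_top P _)).mp
      rw [CrossAux.cdf_tail P hmY a, CrossAux.cdf_tail P hmZ a]
      rw [hTY, hTZ] at hTa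
      simp only [] at hTa
      linarith
    have hle_b : P {ω | Z ω ≤ b} < P {ω | Y ω ≤ b} := by
      apply (ENNReal.toReal_lt_toReal (measure_ne_top P _) (measure_ne_top P _)).mp
      rw [CrossAux.cdf_tail P hmY b, CrossAux.cdf_tail P hmZ b]
      rw [hTY, hTZ] at hTb
      simp only [] at hTb
      linarith
    obtain ⟨x₁, hx₁a, hx₁b, hx₁⟩ := CrossAux.bridge P hmY hmZ hab hle_a
    obtain ⟨x₂, hx₂b, _, hx₂⟩ := CrossAux.bridge P hmZ hmY (lt_add_one b) hle_b
    have h1 := hcon x₁ x₂ (ha.trans hx₁a) (hx₁b.trans hx₂b) hx₁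
    exact absurd hx₂ (not_lt.mpr h1)
  -- the set where D is positive
  set S : Set ℝ := {t : ℝ | 0 < t ∧ 0 < D t} with hS
  have hzero_case : ((∀ t ∈ Set.Ioi (0:ℝ), 0 ≤ D t) ∨ (∀ t ∈ Set.Ioi (0:ℝ), D t ≤ 0)) → False := by
    intro hsgn
    have hae : D =ᵐ[volume.restrict (Set.Ioi 0)] 0 := by
      cases hsgn with
      | inl h =>
        have hnn : 0 ≤ᵐ[volume.restrict (Set.Ioi 0)] D :=
          (ae_restrict_iff' measurableSet_Ioi).mpr (ae_of_all _ h)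
        exact (integral_eq_zero_iff_of_nonneg_ae hnn hDint).mp hD0
      | inr h =>
        have hnn : 0 ≤ᵐ[volume.restrict (Set.Ioi 0)] (fun t => -D t) :=
          (ae_restrict_iff' measurableSet_Ioi).mpr
            (ae_of_all _ (fun t ht => neg_nonneg.mpr (h t ht)))
        have hint' : ∫ t in Set.Ioi 0, -D t = 0 := by
          rw [integral_neg, hD0, neg_zero]
        have hres := (integral_eq_zero_iff_of_nonneg_ae hnn hDint.neg).mp hint'
        filter_upwards [hres] with t ht
        have h2 : -D t = 0 := ht
        have : D t = 0 := by linarith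
        exact this
    have hz : ∫ t in Set.Ioi 0, t * D t = 0 := by
      rw [integral_congr_ae (g := fun _ => (0:ℝ)) ?_, integral_zero]
      filter_upwards [hae] with t ht
      have h2 : D t = 0 := ht
      simp [h2]
    linarith [hD1]
  by_cases hSemp : S = ∅
  · apply hzero_case (Or.inr ?_)
    intro t ht
    by_contra hneg
    have : t ∈ S := ⟨ht, not_le.mp hneg⟩
    rw [hSemp] at this
    exact this
  · have hSne : S.Nonempty := Set.nonempty_iff_ne_empty.mpr hSemp
    by_cases hBdd : BddAbove S
    · set c := sSup S with hc
      have haec : ∀ᵐ t ∂(volume.restrict (Set.Ioi (0:ℝ))), t ≠ c := by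
        apply ae_restrict_of_ae
        rw [ae_iff]
        have hset : {t : ℝ | ¬ t ≠ c} = {c} := by ext t; simp
        rw [hset]
        exact measure_singleton c
      have hpt : ∀ᵐ t ∂(volume.restrict (Set.Ioi (0:ℝ))), (t - c) * D t ≤ 0 := by
        filter_upwards [haec, ae_restrict_mem measurableSet_Ioi] with t htc htmem
        rcases lt_or_gt_of_ne htc with hlt | hgt
        · have hDt : 0 ≤ D t := by
            by_contra hneg
            obtain ⟨u, huS, htu⟩ := exists_lt_of_lt_csSup hSne hlt
            exact Hsign t u htmem htu (not_le.mp hneg) huS.2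
          exact mul_nonpos_of_nonpos_of_nonneg (by linarith) hDt
        · have hDt : D t ≤ 0 := by
            by_contra hneg
            have hmem : t ∈ S := ⟨htmem, not_le.mp hneg⟩
            have := le_csSup hBdd hmem
            linarith
          exact mul_nonpos_of_nonneg_of_nonpos (by linarith) hDt
      have hint_le : ∫ t in Set.Ioi 0, (t - c) * D t ≤ 0 := integral_nonpos_of_ae hpt
      have hexp : ∫ t in Set.Ioi 0, (t - c) * D t
          = (∫ t in Set.Ioi 0, t * D t) - c * ∫ t in Set.Ioi 0, D t := by
        have h1 : (fun t => (t - c) * D t) = fun t => t * D t - c * D t := by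
          funext t; ring
        rw [h1, integral_sub htDint (hDint.const_mul c), integral_const_mul]
      rw [hexp, hD0, mul_zero, sub_zero] at hint_le
      linarith [hD1]
    · apply hzero_case (Or.inl ?_)
      intro t ht
      by_contra hneg
      rw [not_bddAbove_iff] at hBdd
      obtain ⟨u, huS, htu⟩ := hBdd t
      exact Hsign t u ht htu (not_le.mp hneg) huS.2
end
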